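/- Let 𝔤 be a nilpotent Lie algebra, X ∈ 𝔤, and suppose there is a nonzero vector P ∈ 𝔤 and a linear functional θ on 𝔤 such that [X,Z] = θ(Z)·P for all Z ∈ 𝔤 and θ is not identically zero. Then [P,U] = 0 for all U ∈ ker θ. -/

import Mathlib

lemma eig_zero (L : Type*) [LieRing L] [LieAlgebra ℝ L]
    [LieRing.IsNilpotent L] (Y P : L) (c : ℝ) (hP : P ≠ 0)
    (h : ⁅Y, P⁆ = c • P) : c = 0 := by
  obtain ⟨n, hn⟩ := LieModule.isNilpotent_toEnd_of_isNilpotent ℝ L L Y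
  have key : ∀ m : ℕ, ((LieModule.toEnd ℝ L L Y) ^ m) P = c ^ m • P := by
    intro m
    induction m with
    | zero => simp
    | succ k ih =>
      rw [pow_succ', Module.End.mul_apply, ih, map_smul,
        LieModule.toEnd_apply_apply, h, pow_succ', smul_smul, mul_comm]
  have h0 : c ^ n • P = 0 := by
    rw [← key, hn]; rfl
  by_contra hc
  exact hP (by simpa [smul_eq_zero, hc] using h0)

theorem stmt_6 (L : Type*) [LieRing L] [LieAlgebra ℝ L] [FiniteDimensional ℝ L]
    [LieRing.IsNilpotent L] (X P : L) (θ : L →ₗ[ℝ] ℝ)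
    (hP : P ≠ 0) (hθ : θ ≠ 0) (h : ∀ Z : L, ⁅X, Z⁆ = θ Z • P) :
    ∀ U : L, θ U = 0 → ⁅P, U⁆ = 0 := by
  intro U hU
  -- choose W with θ W = 1
  obtain ⟨W₀, hW₀⟩ : ∃ W, θ W ≠ 0 := by
    by_contra hc
    push_neg at hc
    exact hθ (LinearMap.ext fun x => by simp [hc x])
  set W : L := (θ W₀)⁻¹ • W₀ with hW
  have hθW : θ W = 1 := by simp [hW, inv_mul_cancel₀ hW₀]
  -- Jacobi: ⁅X, ⁅U, W⁆⁆ = ⁅⁅X,U⁆,W⁆ + ⁅U,⁅X,W⁆⁆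
  have jac : ⁅X, ⁅U, W⁆⁆ = ⁅⁅X, U⁆, W⁆ + ⁅U, ⁅X, W⁆⁆ := by
    rw [leibniz_lie]
  rw [h, h U, h W, hU, hθW, one_smul, zero_smul, zero_lie, zero_add] at jac
  -- jac : θ ⁅U, W⁆ • P = ⁅U, P⁆
  have hc : θ ⁅U, W⁆ = 0 := eig_zero L U P (θ ⁅U, W⁆) hP jac.symm
  have : ⁅U, P⁆ = 0 := by rw [← jac, hc, zero_smul]
  rw [← lie_skew, this, neg_zero]
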